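/- Let b = 0 (so γ = 1). Then the momentum of the soliton with parameters (ω, c) = (1, 2s) satisfies P(φ_{1,2s}) > 0 for every s ∈ (−1, 1), and P(φ_{1,2}) = 0 for the algebraic soliton (s = 1). -/

import Mathlib

open MeasureTheory Real Set

/-- The soliton profile of the derivative NLS after gauge transformation:
the algebraic profile when `c = 2√ω`, the bright profile when `-2√ω < c < 2√ω`. -/
noncomputable def Phi (γ ω c x : ℝ) : ℝ :=
  if c = 2 * Real.sqrt ω then
    Real.sqrt (4 * c / ((c * x) ^ 2 + γ))
  else
    Real.sqrt (2 * (4 * ω - c ^ 2) /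
      (Real.sqrt (c ^ 2 + γ * (4 * ω - c ^ 2)) * Real.cosh (Real.sqrt (4 * ω - c ^ 2) * x) - c))

/-- The complex soliton profile
`φ_{ω,c}(x) = exp(i((c/2)x - (1/4)∫_{-∞}^x Φ²)) Φ(x)`. -/
noncomputable def solp (γ ω c x : ℝ) : ℂ :=
  Complex.exp (Complex.I *
      Complex.ofReal (c / 2 * x - 1 / 4 * ∫ y in Iic x, (Phi γ ω c y) ^ 2)) *
    Complex.ofReal (Phi γ ω c x)

/-- The momentum `P(φ_{ω,c}) = Re ∫_ℝ i φ' conj(φ)`. -/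
noncomputable def solMom (γ ω c : ℝ) : ℝ :=
  (∫ x : ℝ, Complex.I * deriv (fun y => solp γ ω c y) x *
    (starRingEnd ℂ) (solp γ ω c x)).re

lemma Phi_nonneg (γ ω c x : ℝ) : 0 ≤ Phi γ ω c x := by
  unfold Phi; split <;> exact Real.sqrt_nonneg _

/-- General momentum formula: if `Φ² = g` with `g` positive, differentiable, and suitably
integrable, then `P = ∫ (g²/4 - (c/2) g)`. -/
lemma solMom_eq (c : ℝ) (g g' : ℝ → ℝ)
    (hPhi : ∀ x, Phi 1 1 c x ^ 2 = g x)
    (hgpos : ∀ x, 0 < g x)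
    (hgd : ∀ x, HasDerivAt g (g' x) x)
    (hgint : Integrable g)
    (hg2int : Integrable (fun x => g x ^ 2))
    (hg'int : Integrable g') :
    solMom 1 1 c = ∫ x, (g x ^ 2 / 4 - c / 2 * g x) := by
  have hPhiv : ∀ x, Phi 1 1 c x = Real.sqrt (g x) := by
    intro x
    rw [← hPhi x, Real.sqrt_sq (Phi_nonneg 1 1 c x)]
  have hgcont : Continuous g := by
    rw [continuous_iff_continuousAt]; exact fun x => (hgd x).continuousAt
  set θ : ℝ → ℝ := fun x => c / 2 * x - 1 / 4 * ∫ y in Iic x, g y with hθdef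
  have hFd : ∀ x : ℝ, HasDerivAt (fun t => ∫ y in Iic t, g y) (g x) x := by
    intro x
    have hkey : (fun t => ∫ y in Iic t, g y)
        = fun t => (∫ y in Iic (0:ℝ), g y) + ∫ y in (0:ℝ)..t, g y := by
      funext t
      have := intervalIntegral.integral_Iic_sub_Iic (hgint.integrableOn)
        (hgint.integrableOn) (a := (0:ℝ)) (b := t)
      linarith
    rw [hkey]
    exact (intervalIntegral.integral_hasDerivAt_right
      (hgint.intervalIntegrable)
      (hgcont.stronglyMeasurableAtFilter _ _) hgcont.continuousAt).const_add _
  have hθd : ∀ x, HasDerivAt θ (c / 2 - g x / 4) x := by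
    intro x
    have h1 : HasDerivAt (fun t : ℝ => c / 2 * t) (c / 2) x :=
      (hasDerivAt_id x).const_mul (c / 2) |>.congr_deriv (by ring)
    have h2 := ((hFd x).const_mul (1/4 : ℝ))
    have := h1.sub h2
    exact this.congr_deriv (by ring)
  set v : ℝ → ℝ := fun x => g' x / (2 * Real.sqrt (g x)) with hvdef
  have hsq : ∀ x, HasDerivAt (fun t => Real.sqrt (g t)) (v x) x := by
    intro x
    have := (Real.hasDerivAt_sqrt (hgpos x).ne').comp x (hgd x)
    refine this.congr_deriv (Eq.symm ?_)
    simp [hvdef]; ring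
  have hsolp : solp 1 1 c = fun x =>
      Complex.exp (Complex.I * Complex.ofReal (θ x)) * Complex.ofReal (Real.sqrt (g x)) := by
    funext x
    rw [solp, show (fun y => Phi 1 1 c y ^ 2) = g from funext hPhi, hPhiv x]
  have hsolpd : ∀ x, HasDerivAt (solp 1 1 c)
      (Complex.exp (Complex.I * Complex.ofReal (θ x)) *
        (Complex.I * Complex.ofReal (c / 2 - g x / 4) * Complex.ofReal (Real.sqrt (g x))
          + Complex.ofReal (v x))) x := by
    intro x
    rw [hsolp]
    have h1 : HasDerivAt (fun t => Complex.I * Complex.ofReal (θ t))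
        (Complex.I * Complex.ofReal (c / 2 - g x / 4)) x :=
      ((hθd x).ofReal_comp).const_mul Complex.I
    have h2 := h1.cexp
    have h3 : HasDerivAt (fun t => (Complex.ofReal (Real.sqrt (g t))))
        (Complex.ofReal (v x)) x := (hsq x).ofReal_comp
    have := h2.mul h3
    refine this.congr_deriv (Eq.symm ?_)
    ring
  have hint : ∀ x, Complex.I * deriv (fun y => solp 1 1 c y) x *
      (starRingEnd ℂ) (solp 1 1 c x) =
      Complex.ofReal (g x ^ 2 / 4 - c / 2 * g x) + Complex.I * Complex.ofReal (g' x / 2) := by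
    intro x
    have hd : deriv (fun y => solp 1 1 c y) x = _ := (hsolpd x).deriv
    rw [hd, hsolp]
    have hconj : (starRingEnd ℂ)
        (Complex.exp (Complex.I * Complex.ofReal (θ x)) * Complex.ofReal (Real.sqrt (g x)))
        = Complex.exp (-(Complex.I * Complex.ofReal (θ x))) * Complex.ofReal (Real.sqrt (g x)) := by
      rw [map_mul, ← Complex.exp_conj, Complex.conj_ofReal, map_mul, Complex.conj_I,
        Complex.conj_ofReal]
      ring_nf
    rw [hconj]
    have hexp : Complex.exp (Complex.I * Complex.ofReal (θ x)) *
        Complex.exp (-(Complex.I * Complex.ofReal (θ x))) = 1 := by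
      rw [← Complex.exp_add]; simp
    have hss : (Complex.ofReal (Real.sqrt (g x))) * (Complex.ofReal (Real.sqrt (g x)))
        = Complex.ofReal (g x) := by
      rw [← Complex.ofReal_mul, Real.mul_self_sqrt (hgpos x).le]
    have hvs : (Complex.ofReal (v x)) * (Complex.ofReal (Real.sqrt (g x)))
        = Complex.ofReal (g' x / 2) := by
      rw [← Complex.ofReal_mul]
      congr 1
      have hs : Real.sqrt (g x) ≠ 0 := (Real.sqrt_pos.mpr (hgpos x)).ne'
      simp only [hvdef]
      field_simp
    calc Complex.I * (Complex.exp (Complex.I * Complex.ofReal (θ x)) *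
          (Complex.I * Complex.ofReal (c / 2 - g x / 4) * Complex.ofReal (Real.sqrt (g x))
            + Complex.ofReal (v x))) *
          (Complex.exp (-(Complex.I * Complex.ofReal (θ x))) * Complex.ofReal (Real.sqrt (g x)))
        = (Complex.exp (Complex.I * Complex.ofReal (θ x)) *
            Complex.exp (-(Complex.I * Complex.ofReal (θ x)))) *
          (Complex.I * Complex.I * Complex.ofReal (c / 2 - g x / 4) *
            (Complex.ofReal (Real.sqrt (g x)) * Complex.ofReal (Real.sqrt (g x)))
           + Complex.I * (Complex.ofReal (v x) * Complex.ofReal (Real.sqrt (g x)))) := by ring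
      _ = Complex.ofReal (g x ^ 2 / 4 - c / 2 * g x) + Complex.I * Complex.ofReal (g' x / 2) := by
          rw [hexp, hss, hvs, Complex.I_mul_I]
          push_cast
          ring
  have hu : Integrable (fun x => g x ^ 2 / 4 - c / 2 * g x) := by
    exact (hg2int.div_const 4).sub (hgint.const_mul (c/2))
  have h1 : Integrable (fun x => Complex.ofReal (g x ^ 2 / 4 - c / 2 * g x)) := hu.ofReal
  have h2 : Integrable (fun x => Complex.I * Complex.ofReal (g' x / 2)) :=
    (hg'int.div_const 2).ofReal.const_mul Complex.I
  have h3 : ∀ (u : ℝ → ℝ), (∫ x, Complex.ofReal (u x)) = Complex.ofReal (∫ x, u x) := by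
    intro u; exact integral_ofReal
  rw [solMom]
  rw [integral_congr_ae (Filter.Eventually.of_forall hint)]
  rw [integral_add h1 h2, integral_const_mul, h3, h3]
  simp

lemma integrable_of_le_inv_one_add_sq (f : ℝ → ℝ) (hm : AEStronglyMeasurable f volume)
    (A : ℝ) (h : ∀ x, ‖f x‖ ≤ A * (1 + x ^ 2)⁻¹) : Integrable f :=
  (integrable_inv_one_add_sq.const_mul A).mono' hm (Filter.Eventually.of_forall h)

/-- The algebraic soliton (`ω = 1`, `c = 2`, `γ = 1`) has vanishing momentum. -/
lemma alg_mom : solMom 1 1 2 = 0 := by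
  set g : ℝ → ℝ := fun x => 8 / (4 * x ^ 2 + 1) with hgdef
  set g' : ℝ → ℝ := fun x => -(64 * x) / (4 * x ^ 2 + 1) ^ 2 with hg'def
  have hden : ∀ x : ℝ, (0:ℝ) < 4 * x ^ 2 + 1 := fun x => by positivity
  have hgpos : ∀ x, 0 < g x := fun x => by
    simp only [hgdef]; positivity
  have hdend : ∀ x : ℝ, HasDerivAt (fun x : ℝ => 4 * x ^ 2 + 1) (8 * x) x := by
    intro x
    have := ((hasDerivAt_pow 2 x).const_mul (4:ℝ)).add_const 1
    refine this.congr_deriv (Eq.symm ?_); ring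
  have hgd : ∀ x, HasDerivAt g (g' x) x := by
    intro x
    have := (hasDerivAt_const x (8:ℝ)).div (hdend x) (hden x).ne'
    refine this.congr_deriv (Eq.symm ?_)
    simp only [hg'def]; ring
  have hgcont : Continuous g := by
    rw [continuous_iff_continuousAt]; exact fun x => (hgd x).continuousAt
  have hPhi : ∀ x, Phi 1 1 2 x ^ 2 = g x := by
    intro x
    rw [Phi, if_pos (by rw [Real.sqrt_one]; norm_num)]
    rw [Real.sq_sqrt (by positivity)]
    simp only [hgdef]
    ring_nf
  have hgint : Integrable g := by
    apply integrable_of_le_inv_one_add_sq g hgcont.aestronglyMeasurable 8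
    intro x
    rw [Real.norm_eq_abs, abs_of_pos (hgpos x), ← div_eq_mul_inv]
    rw [div_le_div_iff₀ (hden x) (by positivity)]
    nlinarith [sq_nonneg x]
  have hg2int : Integrable (fun x => g x ^ 2) := by
    apply integrable_of_le_inv_one_add_sq _ (hgcont.pow 2).aestronglyMeasurable 64
    intro x
    rw [Real.norm_eq_abs, Pi.pow_apply, abs_of_pos (pow_pos (hgpos x) 2), ← div_eq_mul_inv]
    simp only [hgdef, div_pow]
    rw [div_le_div_iff₀ (by positivity) (by positivity)]
    nlinarith [sq_nonneg x, sq_nonneg (x^2), hden x]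
  have hg'int : Integrable g' := by
    have hg'cont : Continuous g' := by
      simp only [hg'def]
      exact (continuous_const.mul continuous_id').neg.div
        (((continuous_const.mul (continuous_pow 2)).add continuous_const).pow 2)
        (fun x => by positivity)
    apply integrable_of_le_inv_one_add_sq g' hg'cont.aestronglyMeasurable 16
    intro x
    simp only [hg'def]
    rw [Real.norm_eq_abs, ← div_eq_mul_inv, abs_div, abs_neg,
      abs_of_pos (by positivity : (0:ℝ) < (4 * x ^ 2 + 1) ^ 2)]
    rw [div_le_div_iff₀ (by positivity) (by positivity), abs_mul,
      abs_of_pos (by norm_num : (0:ℝ) < 64)]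
    nlinarith [sq_nonneg (2 * |x| - 1), abs_nonneg x, sq_abs x,
      sq_nonneg (2 * |x| * x - x), sq_nonneg x]
  rw [solMom_eq 2 g g' hPhi hgpos hgd hgint hg2int hg'int]
  have hH : ∀ x : ℝ, HasDerivAt (fun x : ℝ => 8 * x / (4 * x ^ 2 + 1))
      (g x ^ 2 / 4 - 2 / 2 * g x) x := by
    intro x
    have h8 : HasDerivAt (fun x : ℝ => 8 * x) 8 x := by
      simpa using (hasDerivAt_id x).const_mul (8:ℝ)
    have := h8.div (hdend x) (hden x).ne'
    refine this.congr_deriv (Eq.symm ?_)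
    simp only [hgdef]
    field_simp
    ring
  have hint : Integrable (fun x => g x ^ 2 / 4 - 2 / 2 * g x) :=
    (hg2int.div_const 4).sub (hgint.const_mul _)
  have htop : Filter.Tendsto (fun x : ℝ => 8 * x / (4 * x ^ 2 + 1)) Filter.atTop (nhds 0) := by
    apply squeeze_zero_norm' (a := fun x : ℝ => 2 * x⁻¹)
    · filter_upwards [Filter.eventually_ge_atTop (1:ℝ)] with x hx
      rw [Real.norm_eq_abs, abs_of_nonneg (by positivity), ← div_eq_mul_inv,
        div_le_div_iff₀ (hden x) (by linarith)]
      nlinarith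
    · simpa using tendsto_inv_atTop_zero.const_mul (2:ℝ)
  have hbot : Filter.Tendsto (fun x : ℝ => 8 * x / (4 * x ^ 2 + 1)) Filter.atBot (nhds 0) := by
    apply squeeze_zero_norm' (a := fun x : ℝ => 2 * (-x)⁻¹)
    · filter_upwards [Filter.eventually_le_atBot (-1:ℝ)] with x hx
      rw [Real.norm_eq_abs, abs_div, abs_of_pos (hden x),
        abs_of_nonpos (by linarith : 8 * x ≤ 0), ← div_eq_mul_inv,
        div_le_div_iff₀ (hden x) (by linarith)]
      nlinarith
    · have h1 : Filter.Tendsto (fun x : ℝ => -x) Filter.atBot Filter.atTop :=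
        Filter.tendsto_neg_atBot_atTop
      simpa using (tendsto_inv_atTop_zero.comp h1).const_mul (2:ℝ)
  rw [MeasureTheory.integral_of_hasDerivAt_of_tendsto hH hint hbot htop]
  ring

lemma cosh_lb (u : ℝ) : (1 + u ^ 2) / 2 ≤ Real.cosh u := by
  have h1 : Real.cosh u = Real.cosh (u / 2) ^ 2 + Real.sinh (u / 2) ^ 2 := by
    rw [← Real.cosh_two_mul]; ring_nf
  have h2 : Real.cosh (u / 2) ^ 2 = Real.sinh (u / 2) ^ 2 + 1 := Real.cosh_sq _
  have h3 : (u / 2) ^ 2 ≤ Real.sinh (u / 2) ^ 2 := by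
    calc (u / 2) ^ 2 = |u / 2| ^ 2 := (sq_abs _).symm
      _ ≤ Real.sinh |u / 2| ^ 2 :=
          pow_le_pow_left₀ (abs_nonneg _) (Real.self_le_sinh_iff.mpr (abs_nonneg _)) 2
      _ = Real.sinh (u / 2) ^ 2 := by rw [← Real.abs_sinh, sq_abs]
  nlinarith

lemma sinh_abs_le_cosh (u : ℝ) : |Real.sinh u| ≤ Real.cosh u := by
  rw [Real.abs_sinh, ← Real.cosh_abs u]
  nlinarith [Real.cosh_sub_sinh |u|, Real.exp_pos (-|u|)]

/-- The bright soliton (`ω = 1`, `-2 < c < 2`, `γ = 1`) has momentum `2√(4 - c²)`. -/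
lemma bright_mom {c : ℝ} (hc : |c| < 2) :
    solMom 1 1 c = 2 * Real.sqrt (4 - c ^ 2) := by
  have hc2 : c ^ 2 < 4 := by nlinarith [abs_nonneg c, sq_abs c]
  set k : ℝ := Real.sqrt (4 - c ^ 2) with hkdef
  have hk2 : k ^ 2 = 4 - c ^ 2 := Real.sq_sqrt (by linarith)
  have hkpos : (0:ℝ) < k := Real.sqrt_pos.mpr (by linarith)
  have hD : ∀ x : ℝ, 0 < 2 * Real.cosh (k * x) - c := by
    intro x
    nlinarith [Real.one_le_cosh (k * x), le_abs_self c]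
  have hm : (0:ℝ) < 2 - |c| := by linarith
  set g : ℝ → ℝ := fun x => 2 * (4 - c ^ 2) / (2 * Real.cosh (k * x) - c) with hgdef
  set g' : ℝ → ℝ := fun x =>
    -(2 * (4 - c ^ 2) * (2 * (Real.sinh (k * x) * k))) / (2 * Real.cosh (k * x) - c) ^ 2
    with hg'def
  have hgpos : ∀ x : ℝ, 0 < g x := by
    intro x; exact div_pos (by nlinarith) (hD x)
  have hPhi : ∀ x, Phi 1 1 c x ^ 2 = g x := by
    intro x
    have hne : ¬(c = 2 * Real.sqrt 1) := by
      rw [Real.sqrt_one]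
      intro h
      rw [h] at hc
      norm_num at hc
    have e2 : c ^ 2 + 1 * ((4:ℝ) * 1 - c ^ 2) = 4 := by ring
    have e1 : (4:ℝ) * 1 - c ^ 2 = 4 - c ^ 2 := by ring
    have h4 : Real.sqrt 4 = 2 := by
      rw [show (4:ℝ) = 2 ^ 2 by norm_num]
      exact Real.sqrt_sq (by norm_num)
    rw [Phi, if_neg hne, e2, e1, h4]
    exact Real.sq_sqrt (div_nonneg (by nlinarith) (hD x).le)
  have hdend : ∀ x : ℝ, HasDerivAt (fun x : ℝ => 2 * Real.cosh (k * x) - c)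
      (2 * (Real.sinh (k * x) * k)) x := by
    intro x
    have h1 : HasDerivAt (fun x : ℝ => k * x) k x := by
      simpa using (hasDerivAt_id x).const_mul k
    simpa using (h1.cosh.const_mul 2).sub_const c
  have hgd : ∀ x, HasDerivAt g (g' x) x := by
    intro x
    have := (hasDerivAt_const x (2 * (4 - c ^ 2))).div (hdend x) (hD x).ne'
    refine this.congr_deriv (Eq.symm ?_)
    simp only [hg'def]
    ring
  have hgcont : Continuous g := by
    rw [continuous_iff_continuousAt]; exact fun x => (hgd x).continuousAt
  have hDlb : ∀ x : ℝ, (2 - |c|) * k ^ 2 / 8 * (1 + x ^ 2) ≤ 2 * Real.cosh (k * x) - c := by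
    intro x
    have h1 := cosh_lb (k * x)
    have h2 : (2 - |c|) * Real.cosh (k * x) ≤ 2 * Real.cosh (k * x) - c := by
      nlinarith [mul_le_mul_of_nonneg_left (Real.one_le_cosh (k * x)) (abs_nonneg c),
        le_abs_self c]
    have h3 : (2 - |c|) * ((1 + (k * x) ^ 2) / 2) ≤ (2 - |c|) * Real.cosh (k * x) :=
      mul_le_mul_of_nonneg_left h1 (by linarith)
    have hk4 : k ^ 2 ≤ 4 := by nlinarith
    nlinarith [mul_nonneg (mul_nonneg (by linarith : (0:ℝ) ≤ 2 - |c|)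
      (by nlinarith : (0:ℝ) ≤ 4 - k ^ 2)) (sq_nonneg x), sq_nonneg (k * x)]
  have hgbd : ∀ x : ℝ, g x ≤ 16 / (2 - |c|) * (1 + x ^ 2)⁻¹ := by
    intro x
    rw [hgdef, ← div_eq_mul_inv, div_le_div_iff₀ (hD x) (by positivity)]
    have := mul_le_mul_of_nonneg_left (hDlb x)
      (div_nonneg (by norm_num) hm.le : (0:ℝ) ≤ 16 / (2 - |c|))
    calc 2 * (4 - c ^ 2) * (1 + x ^ 2)
        = 16 / (2 - |c|) * ((2 - |c|) * k ^ 2 / 8 * (1 + x ^ 2)) := by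
          rw [hk2]; field_simp; ring
      _ ≤ 16 / (2 - |c|) * (2 * Real.cosh (k * x) - c) := this
  have hgint : Integrable g := by
    apply (integrable_inv_one_add_sq.const_mul (16 / (2 - |c|))).mono'
      hgcont.aestronglyMeasurable
    apply Filter.Eventually.of_forall
    intro x
    rw [Real.norm_eq_abs, abs_of_pos (hgpos x)]
    exact hgbd x
  have hg2int : Integrable (fun x => g x ^ 2) := by
    apply (integrable_inv_one_add_sq.const_mul
      (2 * (4 - c ^ 2) / (2 - |c|) * (16 / (2 - |c|)))).mono'
      (hgcont.pow 2).aestronglyMeasurable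
    apply Filter.Eventually.of_forall
    intro x
    rw [Real.norm_eq_abs, Pi.pow_apply, abs_of_pos (pow_pos (hgpos x) 2)]
    have hub : g x ≤ 2 * (4 - c ^ 2) / (2 - |c|) := by
      rw [hgdef]
      apply div_le_div_of_nonneg_left (by nlinarith) hm
      nlinarith [Real.one_le_cosh (k * x), le_abs_self c]
    calc g x ^ 2 = g x * g x := sq _
      _ ≤ (2 * (4 - c ^ 2) / (2 - |c|)) * (16 / (2 - |c|) * (1 + x ^ 2)⁻¹) :=
          mul_le_mul hub (hgbd x) (hgpos x).le
            (div_nonneg (by nlinarith) hm.le)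
      _ = 2 * (4 - c ^ 2) / (2 - |c|) * (16 / (2 - |c|)) * (1 + x ^ 2)⁻¹ := by ring
  have hg'int : Integrable g' := by
    have hg'cont : Continuous g' := by
      rw [hg'def]
      exact Continuous.div (by fun_prop) (by fun_prop)
        (fun x => pow_ne_zero 2 (hD x).ne')
    apply (integrable_inv_one_add_sq.const_mul (32 * k / (2 - |c|) ^ 2)).mono'
      hg'cont.aestronglyMeasurable
    apply Filter.Eventually.of_forall
    intro x
    rw [hg'def]
    have h1 : (2 - |c|) * |Real.sinh (k * x)| ≤ 2 * Real.cosh (k * x) - c := by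
      have := sinh_abs_le_cosh (k * x)
      nlinarith [mul_le_mul_of_nonneg_left (Real.one_le_cosh (k * x)) (abs_nonneg c),
        le_abs_self c, abs_nonneg (Real.sinh (k * x))]
    have h0 : (0:ℝ) ≤ (2 - |c|) * k ^ 2 / 8 * (1 + x ^ 2) := by
      have := mul_nonneg (mul_nonneg hm.le (sq_nonneg k))
        (by positivity : (0:ℝ) ≤ 1 + x ^ 2)
      nlinarith
    have hp := mul_le_mul h1 (hDlb x) h0 (hD x).le
    have habs : |(-(2 * (4 - c ^ 2) * (2 * (Real.sinh (k * x) * k))) /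
        (2 * Real.cosh (k * x) - c) ^ 2)|
        = 2 * (4 - c ^ 2) * (2 * k) * |Real.sinh (k * x)| /
          (2 * Real.cosh (k * x) - c) ^ 2 := by
      rw [abs_div, abs_neg, abs_of_pos (pow_pos (hD x) 2)]
      simp only [abs_mul, abs_two, abs_of_pos hkpos,
        abs_of_nonneg (show (0:ℝ) ≤ 4 - c ^ 2 by nlinarith)]
      ring
    rw [Real.norm_eq_abs, habs, ← div_eq_mul_inv,
      div_le_div_iff₀ (pow_pos (hD x) 2) (by positivity),
      ← mul_le_mul_iff_of_pos_left (by positivity : (0:ℝ) < (2 - |c|) ^ 2)]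
    have hr : (2 - |c|) ^ 2 * (32 * k / (2 - |c|) ^ 2 * (2 * Real.cosh (k * x) - c) ^ 2)
        = 32 * k * (2 * Real.cosh (k * x) - c) ^ 2 := by
      field_simp
    rw [hr, ← hk2]
    nlinarith [mul_le_mul_of_nonneg_left hp (by positivity : (0:ℝ) ≤ 32 * k)]
  rw [solMom_eq c g g' hPhi hgpos hgd hgint hg2int hg'int]
  have hnumd : ∀ x : ℝ, HasDerivAt (fun x : ℝ => 2 * k * Real.sinh (k * x))
      (2 * k * (Real.cosh (k * x) * k)) x := by
    intro x
    have h1 : HasDerivAt (fun x : ℝ => k * x) k x := by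
      simpa using (hasDerivAt_id x).const_mul k
    simpa using h1.sinh.const_mul (2 * k)
  have hH : ∀ x : ℝ, HasDerivAt
      (fun x : ℝ => 2 * k * Real.sinh (k * x) / (2 * Real.cosh (k * x) - c))
      (g x ^ 2 / 4 - c / 2 * g x) x := by
    intro x
    have := (hnumd x).div (hdend x) (hD x).ne'
    refine this.congr_deriv (Eq.symm ?_)
    have hs := Real.sinh_sq (k * x)
    have hnum : 2 * k * (Real.cosh (k * x) * k) * (2 * Real.cosh (k * x) - c)
        - 2 * k * Real.sinh (k * x) * (2 * (Real.sinh (k * x) * k))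
        = k ^ 2 * (4 - 2 * c * Real.cosh (k * x)) := by
      linear_combination (-4 * k ^ 2) * hs
    rw [hgdef, hnum, hk2]
    field_simp [(hD x).ne']
    ring
  have hint : Integrable (fun x => g x ^ 2 / 4 - c / 2 * g x) :=
    (hg2int.div_const 4).sub (hgint.const_mul _)
  have hqE : ∀ x : ℝ, Real.exp (k * x) * Real.exp (-(k * x)) = 1 := by
    intro x; rw [← Real.exp_add]; simp
  have hHtop : ∀ x : ℝ, 2 * k * Real.sinh (k * x) / (2 * Real.cosh (k * x) - c)
      = k * (1 - Real.exp (-(k * x)) ^ 2) /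
        (1 + Real.exp (-(k * x)) ^ 2 - c * Real.exp (-(k * x))) := by
    intro x
    have hden2 : 1 + Real.exp (-(k * x)) ^ 2 - c * Real.exp (-(k * x))
        = Real.exp (-(k * x)) * (2 * Real.cosh (k * x) - c) := by
      rw [Real.cosh_eq]
      linear_combination -hqE x
    have h1 : 1 - Real.exp (-(k * x)) ^ 2
        = Real.exp (-(k * x)) * (Real.exp (k * x) - Real.exp (-(k * x))) := by
      linear_combination -hqE x
    rw [hden2, h1, show k * (Real.exp (-(k * x)) * (Real.exp (k * x) - Real.exp (-(k * x))))
        = Real.exp (-(k * x)) * (k * (Real.exp (k * x) - Real.exp (-(k * x)))) from by ring,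
      mul_div_mul_left _ _ (Real.exp_ne_zero _)]
    rw [Real.sinh_eq]
    congr 1
    ring
  have hHbot : ∀ x : ℝ, 2 * k * Real.sinh (k * x) / (2 * Real.cosh (k * x) - c)
      = k * (Real.exp (k * x) ^ 2 - 1) /
        (Real.exp (k * x) ^ 2 + 1 - c * Real.exp (k * x)) := by
    intro x
    have hden2 : Real.exp (k * x) ^ 2 + 1 - c * Real.exp (k * x)
        = Real.exp (k * x) * (2 * Real.cosh (k * x) - c) := by
      rw [Real.cosh_eq]
      linear_combination -hqE x
    have h1 : Real.exp (k * x) ^ 2 - 1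
        = Real.exp (k * x) * (Real.exp (k * x) - Real.exp (-(k * x))) := by
      linear_combination hqE x
    rw [hden2, h1, show k * (Real.exp (k * x) * (Real.exp (k * x) - Real.exp (-(k * x))))
        = Real.exp (k * x) * (k * (Real.exp (k * x) - Real.exp (-(k * x)))) from by ring,
      mul_div_mul_left _ _ (Real.exp_ne_zero _)]
    rw [Real.sinh_eq]
    congr 1
    ring
  have hqtop : Filter.Tendsto (fun x : ℝ => Real.exp (-(k * x))) Filter.atTop (nhds 0) := by
    apply Real.tendsto_exp_atBot.comp
    exact (Filter.tendsto_neg_atTop_atBot).comp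
      (Filter.Tendsto.const_mul_atTop hkpos Filter.tendsto_id)
  have hqbot : Filter.Tendsto (fun x : ℝ => Real.exp (k * x)) Filter.atBot (nhds 0) := by
    apply Real.tendsto_exp_atBot.comp
    exact Filter.Tendsto.const_mul_atBot hkpos Filter.tendsto_id
  have htop : Filter.Tendsto
      (fun x : ℝ => 2 * k * Real.sinh (k * x) / (2 * Real.cosh (k * x) - c))
      Filter.atTop (nhds k) := by
    rw [show (fun x : ℝ => 2 * k * Real.sinh (k * x) / (2 * Real.cosh (k * x) - c))
      = fun x => k * (1 - Real.exp (-(k * x)) ^ 2) /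
        (1 + Real.exp (-(k * x)) ^ 2 - c * Real.exp (-(k * x))) from funext hHtop]
    have hnum : Filter.Tendsto (fun x : ℝ => k * (1 - Real.exp (-(k * x)) ^ 2)) Filter.atTop
        (nhds (k * (1 - 0 ^ 2))) := (((hqtop.pow 2).const_sub 1).const_mul k)
    have hden : Filter.Tendsto (fun x : ℝ =>
        1 + Real.exp (-(k * x)) ^ 2 - c * Real.exp (-(k * x))) Filter.atTop
        (nhds (1 + 0 ^ 2 - c * 0)) := ((hqtop.pow 2).const_add 1).sub (hqtop.const_mul c)
    have := hnum.div hden (by norm_num)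
    convert this using 2 <;> norm_num
  have hbot : Filter.Tendsto
      (fun x : ℝ => 2 * k * Real.sinh (k * x) / (2 * Real.cosh (k * x) - c))
      Filter.atBot (nhds (-k)) := by
    rw [show (fun x : ℝ => 2 * k * Real.sinh (k * x) / (2 * Real.cosh (k * x) - c))
      = fun x => k * (Real.exp (k * x) ^ 2 - 1) /
        (Real.exp (k * x) ^ 2 + 1 - c * Real.exp (k * x)) from funext hHbot]
    have hnum : Filter.Tendsto (fun x : ℝ => k * (Real.exp (k * x) ^ 2 - 1)) Filter.atBot
        (nhds (k * (0 ^ 2 - 1))) := (((hqbot.pow 2).sub_const 1).const_mul k)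
    have hden : Filter.Tendsto (fun x : ℝ =>
        Real.exp (k * x) ^ 2 + 1 - c * Real.exp (k * x)) Filter.atBot
        (nhds (0 ^ 2 + 1 - c * 0)) := ((hqbot.pow 2).add_const 1).sub (hqbot.const_mul c)
    have := hnum.div hden (by norm_num)
    convert this using 2 <;> norm_num
  rw [MeasureTheory.integral_of_hasDerivAt_of_tendsto hH hint hbot htop]
  ring

/-- For `b = 0` (so `γ = 1`): `P(φ_{1,2s}) > 0` for `s ∈ (-1,1)`, and the algebraic
soliton has vanishing momentum, `P(φ_{1,2}) = 0`. -/
theorem stmt_12 (b γ : ℝ) (hb : b = 0) (hγ : γ = 1 + 16 / 3 * b) :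
    (∀ s ∈ Ioo (-1 : ℝ) 1, 0 < solMom γ 1 (2 * s)) ∧ solMom γ 1 2 = 0 := by
  subst hb
  have hγ1 : γ = 1 := by rw [hγ]; ring
  subst hγ1
  constructor
  · intro s hs
    obtain ⟨hs1, hs2⟩ := hs
    have hc : |2 * s| < 2 := by
      rw [abs_mul, abs_of_pos (by norm_num : (0:ℝ) < 2)]
      have : |s| < 1 := abs_lt.mpr ⟨hs1, hs2⟩
      linarith
    rw [bright_mom hc]
    have h4 : (0:ℝ) < 4 - (2 * s) ^ 2 := by nlinarith [abs_nonneg (2*s), sq_abs (2*s)]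
    positivity
  · exact alg_mom
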